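/- With F_α as above, there is a constant C (depending on α and n) such that |∇_y F_α(x,y,r)| ≤ C e^{-|x-ry|²/(2(1-r²))} / √(1-r²) for all x, y ∈ ℝ^n and r ∈ (0,1). -/

import Mathlib

/-- One-dimensional physicists' Hermite polynomials:
`H_0 = 1`, `H_{k+1}(t) = 2 t H_k(t) - H_k'(t)`. -/
noncomputable def hermiteP : ℕ → ℝ → ℝ
  | 0 => fun _ => 1
  | (k + 1) => fun t => 2 * t * hermiteP k t - deriv (hermiteP k) t

lemma hermiteP_poly (k : ℕ) : ∃ p : Polynomial ℝ, ∀ t, hermiteP k t = p.eval t := by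
  induction k with
  | zero => exact ⟨1, fun t => by simp [hermiteP]⟩
  | succ k ih =>
    obtain ⟨p, hp⟩ := ih
    refine ⟨2 * Polynomial.X * p - Polynomial.derivative p, fun t => ?_⟩
    have hfun : hermiteP k = fun t => p.eval t := funext hp
    simp only [hermiteP, hfun, Polynomial.deriv, Polynomial.eval_sub,
      Polynomial.eval_mul, Polynomial.eval_ofNat, Polynomial.eval_X]

lemma poly_bound (p : Polynomial ℝ) : ∃ C : ℝ, 1 ≤ C ∧
    ∀ t : ℝ, |p.eval t| ≤ C * Real.exp (t ^ 2 / 2) := by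
  set N := p.natDegree + 1 with hN
  refine ⟨max 1 ((∑ i ∈ Finset.range N, |p.coeff i| * (Nat.factorial i : ℝ)) *
      Real.exp (1 / 2)), le_max_left _ _, fun t => ?_⟩
  have h1 : |p.eval t| ≤ ∑ i ∈ Finset.range N, |p.coeff i| * |t| ^ i := by
    rw [Polynomial.eval_eq_sum_range]
    refine (Finset.abs_sum_le_sum_abs _ _).trans ?_
    refine Finset.sum_le_sum fun i _ => ?_
    rw [abs_mul, abs_pow]
  have h2 : ∀ i : ℕ, |t| ^ i ≤ (Nat.factorial i : ℝ) * Real.exp |t| := by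
    intro i
    have := Real.pow_div_factorial_le_exp (x := |t|) (abs_nonneg t) i
    have hfac : (0:ℝ) < (Nat.factorial i : ℝ) := by positivity
    rw [div_le_iff₀ hfac] at this
    linarith [this]
  have h3 : Real.exp |t| ≤ Real.exp (1/2) * Real.exp (t ^ 2 / 2) := by
    rw [← Real.exp_add]
    apply Real.exp_le_exp.2
    nlinarith [sq_nonneg (|t| - 1), sq_abs t]
  calc |p.eval t| ≤ ∑ i ∈ Finset.range N, |p.coeff i| * |t| ^ i := h1
    _ ≤ ∑ i ∈ Finset.range N, |p.coeff i| * ((Nat.factorial i : ℝ) * Real.exp |t|) := by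
        refine Finset.sum_le_sum fun i _ => ?_
        exact mul_le_mul_of_nonneg_left (h2 i) (abs_nonneg _)
    _ = (∑ i ∈ Finset.range N, |p.coeff i| * (Nat.factorial i : ℝ)) * Real.exp |t| := by
        rw [Finset.sum_mul]; congr 1; ext i; ring
    _ ≤ (∑ i ∈ Finset.range N, |p.coeff i| * (Nat.factorial i : ℝ)) *
          (Real.exp (1/2) * Real.exp (t ^ 2 / 2)) := by
        refine mul_le_mul_of_nonneg_left h3 ?_
        positivity
    _ = ((∑ i ∈ Finset.range N, |p.coeff i| * (Nat.factorial i : ℝ)) * Real.exp (1/2)) *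
          Real.exp (t ^ 2 / 2) := by ring
    _ ≤ max 1 ((∑ i ∈ Finset.range N, |p.coeff i| * (Nat.factorial i : ℝ)) * Real.exp (1/2)) *
          Real.exp (t ^ 2 / 2) := by
        exact mul_le_mul_of_nonneg_right (le_max_right _ _) (Real.exp_nonneg _)

noncomputable def gH (k : ℕ) (t : ℝ) : ℝ := hermiteP k t * Real.exp (-t ^ 2)

lemma gH_hasDerivAt (k : ℕ) (t : ℝ) : HasDerivAt (gH k) (-(gH (k + 1) t)) t := by
  obtain ⟨p, hp⟩ := hermiteP_poly k
  have hfun : hermiteP k = fun t => p.eval t := funext hp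
  have hgfun : gH k = fun t => p.eval t * Real.exp (-t ^ 2) := by
    funext s; rw [gH, hp]
  rw [hgfun]
  have h1 : HasDerivAt (fun s : ℝ => p.eval s) ((Polynomial.derivative p).eval t) t :=
    p.hasDerivAt t
  have h2 : HasDerivAt (fun s : ℝ => Real.exp (-s ^ 2)) (-(2 * t) * Real.exp (-t ^ 2)) t := by
    have := ((hasDerivAt_pow 2 t).neg).exp
    simpa [mul_comm] using this
  have : HasDerivAt (fun s => p.eval s * Real.exp (-s ^ 2)) _ t := h1.mul h2
  convert this using 1
  have hd : deriv (hermiteP k) t = (Polynomial.derivative p).eval t := by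
    rw [hfun, Polynomial.deriv]
  simp [gH, hermiteP, hd, hp]
  ring

lemma exists_gH_bound (k : ℕ) : ∃ C : ℝ, 1 ≤ C ∧
    ∀ t : ℝ, |gH k t| ≤ C * Real.exp (-t ^ 2 / 2) := by
  obtain ⟨p, hp⟩ := hermiteP_poly k
  obtain ⟨C, hC1, hC⟩ := poly_bound p
  refine ⟨C, hC1, fun t => ?_⟩
  have := hC t
  rw [gH, hp, abs_mul, abs_of_pos (Real.exp_pos _)]
  calc |p.eval t| * Real.exp (-t ^ 2)
      ≤ C * Real.exp (t ^ 2 / 2) * Real.exp (-t ^ 2) := by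
        exact mul_le_mul_of_nonneg_right this (Real.exp_nonneg _)
    _ = C * Real.exp (-t ^ 2 / 2) := by rw [mul_assoc, ← Real.exp_add]; ring_nf

noncomputable def hB (k : ℕ) : ℝ := (exists_gH_bound k).choose

lemma hB_one (k : ℕ) : 1 ≤ hB k := (exists_gH_bound k).choose_spec.1

lemma hB_le (k : ℕ) (t : ℝ) : |gH k t| ≤ hB k * Real.exp (-t ^ 2 / 2) :=
  (exists_gH_bound k).choose_spec.2 t

lemma hB_pos (k : ℕ) : 0 < hB k := lt_of_lt_of_le one_pos (hB_one k)

lemma eucl_norm_sq {n : ℕ} (w : EuclideanSpace ℝ (Fin n)) : ‖w‖ ^ 2 = ∑ i, (w i) ^ 2 := by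
  rw [EuclideanSpace.norm_eq, Real.sq_sqrt (by positivity)]
  simp [Real.norm_eq_abs, sq_abs]

lemma proj_norm_le {n : ℕ} (i : Fin n) :
    ‖(EuclideanSpace.proj i : EuclideanSpace ℝ (Fin n) →L[ℝ] ℝ)‖ ≤ 1 := by
  refine ContinuousLinearMap.opNorm_le_bound _ zero_le_one (fun z => ?_)
  rw [one_mul]
  show ‖z i‖ ≤ ‖z‖
  rw [Real.norm_eq_abs]
  calc |z i| = Real.sqrt ((z i) ^ 2) := (Real.sqrt_sq_eq_abs _).symm
    _ ≤ Real.sqrt (∑ j, (z j) ^ 2) := Real.sqrt_le_sqrt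
        (Finset.single_le_sum (f := fun j => (z j) ^ 2) (fun j _ => sq_nonneg _)
          (Finset.mem_univ i))
    _ = ‖z‖ := by rw [← eucl_norm_sq z, Real.sqrt_sq (norm_nonneg z)]

lemma smul_smul_norm_le {F : Type*} [SeminormedAddCommGroup F] [NormedSpace ℝ F]
    (a b : ℝ) (T : F) (hT : ‖T‖ ≤ 1) : ‖a • b • T‖ ≤ |a| * |b| := by
  calc ‖a • b • T‖ ≤ ‖a‖ * ‖b • T‖ := norm_smul_le _ _
    _ ≤ ‖a‖ * (‖b‖ * ‖T‖) := mul_le_mul_of_nonneg_left (norm_smul_le _ _) (norm_nonneg _)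
    _ ≤ ‖a‖ * (‖b‖ * 1) := by
        refine mul_le_mul_of_nonneg_left ?_ (norm_nonneg _)
        exact mul_le_mul_of_nonneg_left hT (norm_nonneg _)
    _ = |a| * |b| := by rw [Real.norm_eq_abs, Real.norm_eq_abs, mul_one]

/-- `n`-dimensional Hermite polynomial `H_α(u) = ∏ᵢ H_{αᵢ}(uᵢ)`. -/
noncomputable def HermiteN {n : ℕ} (α : Fin n → ℕ) (u : EuclideanSpace ℝ (Fin n)) : ℝ :=
  ∏ i, hermiteP (α i) (u i)

set_option maxHeartbeats 1000000 in
set_option synthInstance.maxHeartbeats 400000 in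
/-- With
`F_α(x,y,r) = H_α((x-ry)/√(1-r²)) e^{-|x-ry|²/(1-r²)}`, there is `C > 0`
(depending on `α` and `n`) with
`|∇_y F_α(x,y,r)| ≤ C e^{-|x-ry|²/(2(1-r²))} / √(1-r²)`
for all `x, y ∈ ℝⁿ` and `r ∈ (0,1)`. -/
theorem gradient_F_alpha_bound {n : ℕ} (α : Fin n → ℕ) :
    ∃ C : ℝ, 0 < C ∧ ∀ (x y : EuclideanSpace ℝ (Fin n)), ∀ r ∈ Set.Ioo (0 : ℝ) 1,
      ‖gradient (fun z : EuclideanSpace ℝ (Fin n) =>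
          HermiteN α ((Real.sqrt (1 - r ^ 2))⁻¹ • (x - r • z)) *
            Real.exp (-‖x - r • z‖ ^ 2 / (1 - r ^ 2))) y‖
        ≤ C * Real.exp (-‖x - r • y‖ ^ 2 / (2 * (1 - r ^ 2))) / Real.sqrt (1 - r ^ 2) := by
  classical
  set P : ℝ := ∏ j, hB (α j) with hP
  set S : ℝ := ∑ i, hB (α i + 1) with hS
  have hP0 : 0 < P := Finset.prod_pos (fun j _ => hB_pos _)
  have hS0 : 0 ≤ S := Finset.sum_nonneg (fun i _ => (hB_pos _).le)
  refine ⟨P * S + 1, by positivity, ?_⟩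
  rintro x y r ⟨hr0, hr1⟩
  set s := Real.sqrt (1 - r ^ 2) with hs
  have h1r : (0:ℝ) < 1 - r ^ 2 := by nlinarith
  have hs0 : 0 < s := Real.sqrt_pos.2 h1r
  have hs2 : s ^ 2 = 1 - r ^ 2 := Real.sq_sqrt h1r.le
  -- rewrite the function as a product of one-dimensional factors
  have hfeq : (fun z : EuclideanSpace ℝ (Fin n) =>
      HermiteN α (s⁻¹ • (x - r • z)) * Real.exp (-‖x - r • z‖ ^ 2 / (1 - r ^ 2))) =
      fun z : EuclideanSpace ℝ (Fin n) => ∏ i, gH (α i) (s⁻¹ * (x i - r * z i)) := by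
    funext z
    have hcoord : ∀ i : Fin n, ((s⁻¹ • (x - r • z)) : EuclideanSpace ℝ (Fin n)) i
        = s⁻¹ * (x i - r * z i) := by
      intro i
      simp [PiLp.smul_apply, PiLp.sub_apply, smul_eq_mul]
    have hnorm : ‖x - r • z‖ ^ 2 = ∑ i, (x i - r * z i) ^ 2 := by
      rw [eucl_norm_sq]
      refine Finset.sum_congr rfl (fun i _ => ?_)
      simp [PiLp.sub_apply, PiLp.smul_apply, smul_eq_mul]
    have hexp : Real.exp (-‖x - r • z‖ ^ 2 / (1 - r ^ 2)) =
        ∏ i, Real.exp (-(s⁻¹ * (x i - r * z i)) ^ 2) := by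
      rw [← Real.exp_sum]
      congr 1
      rw [hnorm, neg_div, Finset.sum_div, ← Finset.sum_neg_distrib]
      refine Finset.sum_congr rfl (fun i _ => ?_)
      rw [mul_pow, inv_pow, ← hs2, div_eq_mul_inv, mul_comm]
    rw [hexp, HermiteN, ← Finset.prod_mul_distrib]
    refine Finset.prod_congr rfl (fun i _ => ?_)
    rw [gH, hcoord]
  rw [hfeq]
  -- derivative of each factor
  set d : Fin n → ℝ := fun i => gH (α i + 1) (s⁻¹ * (x i - r * y i)) * (s⁻¹ * r) with hd
  have hchain : ∀ i : Fin n,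
      HasDerivAt (fun t : ℝ => gH (α i) (s⁻¹ * (x i - r * t))) (d i) (y i) := by
    intro i
    have hinner : HasDerivAt (fun t : ℝ => s⁻¹ * (x i - r * t)) (s⁻¹ * (-r)) (y i) := by
      have h0 : HasDerivAt (fun t : ℝ => x i - r * t) (-r) (y i) := by
        simpa using ((hasDerivAt_id (y i)).const_mul r).const_sub (x i)
      simpa using h0.const_mul s⁻¹
    have houter := gH_hasDerivAt (α i) (s⁻¹ * (x i - r * y i))
    have : HasDerivAt (fun t : ℝ => gH (α i) (s⁻¹ * (x i - r * t)))
        (-(gH (α i + 1) (s⁻¹ * (x i - r * y i))) * (s⁻¹ * (-r))) (y i) :=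
      by have h := houter.comp (y i) hinner; exact h
    convert this using 1
    ring
  have hpsi : ∀ i : Fin n,
      HasFDerivAt (fun z : EuclideanSpace ℝ (Fin n) => gH (α i) (s⁻¹ * (x i - r * z i)))
        ((d i) • (EuclideanSpace.proj i : EuclideanSpace ℝ (Fin n) →L[ℝ] ℝ)) y := by
    intro i
    have hproj : HasFDerivAt (fun z : EuclideanSpace ℝ (Fin n) => z i)
        (EuclideanSpace.proj i : EuclideanSpace ℝ (Fin n) →L[ℝ] ℝ) y :=
      (EuclideanSpace.proj i : EuclideanSpace ℝ (Fin n) →L[ℝ] ℝ).hasFDerivAt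
    exact (hchain i).comp_hasFDerivAt y hproj
  have hprod := HasFDerivAt.finset_prod (u := (Finset.univ : Finset (Fin n))) (fun i _ => hpsi i)
  set L : EuclideanSpace ℝ (Fin n) →L[ℝ] ℝ :=
    ∑ i, (∏ j ∈ Finset.univ.erase i, gH (α j) (s⁻¹ * (x j - r * y j))) •
      ((d i) • (EuclideanSpace.proj i : EuclideanSpace ℝ (Fin n) →L[ℝ] ℝ)) with hL
  have hF : HasFDerivAt (fun z : EuclideanSpace ℝ (Fin n) =>
      ∏ i, gH (α i) (s⁻¹ * (x i - r * z i))) L y := hprod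
  -- gradient norm equals operator norm
  have hgradL : ‖gradient (fun z : EuclideanSpace ℝ (Fin n) =>
      ∏ i, gH (α i) (s⁻¹ * (x i - r * z i))) y‖ = ‖L‖ := by
    rw [gradient, hF.fderiv]
    exact (InnerProductSpace.toDual ℝ (EuclideanSpace ℝ (Fin n))).symm.norm_map L
  rw [hgradL]
  -- per-coordinate exponential factors
  set E : Fin n → ℝ := fun i => Real.exp (-(s⁻¹ * (x i - r * y i)) ^ 2 / 2) with hE
  have hE0 : ∀ i, 0 < E i := fun i => Real.exp_pos _
  set Ex : ℝ := Real.exp (-‖x - r • y‖ ^ 2 / (2 * (1 - r ^ 2))) with hEx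
  have hEx0 : 0 < Ex := Real.exp_pos _
  have hprodE : ∏ i, E i = Ex := by
    rw [hE, ← Real.exp_sum, hEx]
    congr 1
    have hnorm : ‖x - r • y‖ ^ 2 = ∑ i, (x i - r * y i) ^ 2 := by
      rw [eucl_norm_sq]
      refine Finset.sum_congr rfl (fun i _ => ?_)
      simp [PiLp.sub_apply, PiLp.smul_apply, smul_eq_mul]
    rw [hnorm, neg_div, Finset.sum_div, ← Finset.sum_neg_distrib]
    refine Finset.sum_congr rfl (fun i _ => ?_)
    rw [mul_pow, inv_pow, ← hs2]
    have key : ∀ a b : ℝ, -(b⁻¹ * a) / 2 = -(a / (2 * b)) := by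
      intro a b
      rw [mul_comm, ← div_eq_mul_inv, neg_div, div_div, mul_comm b 2]
    exact key _ _
  -- bound the operator norm
  have hterm : ∀ i : Fin n,
      ‖(∏ j ∈ Finset.univ.erase i, gH (α j) (s⁻¹ * (x j - r * y j))) •
        ((d i) • (EuclideanSpace.proj i : EuclideanSpace ℝ (Fin n) →L[ℝ] ℝ))‖
      ≤ P * Ex * hB (α i + 1) * s⁻¹ := by
    intro i
    have hb1 := smul_smul_norm_le
      (∏ j ∈ Finset.univ.erase i, gH (α j) (s⁻¹ * (x j - r * y j))) (d i)
      (EuclideanSpace.proj i : EuclideanSpace ℝ (Fin n) →L[ℝ] ℝ) (proj_norm_le i)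
    refine hb1.trans ?_
    have h1 : |∏ j ∈ Finset.univ.erase i, gH (α j) (s⁻¹ * (x j - r * y j))|
        ≤ ∏ j ∈ Finset.univ.erase i, hB (α j) * E j := by
      rw [Finset.abs_prod]
      refine Finset.prod_le_prod (fun j _ => abs_nonneg _) (fun j _ => hB_le _ _)
    have h2 : |d i| ≤ hB (α i + 1) * E i * s⁻¹ := by
      rw [hd]
      have habs : |gH (α i + 1) (s⁻¹ * (x i - r * y i)) * (s⁻¹ * r)|
          = |gH (α i + 1) (s⁻¹ * (x i - r * y i))| * (s⁻¹ * r) := by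
        rw [abs_mul, abs_of_pos (mul_pos (inv_pos.2 hs0) hr0)]
      rw [habs]
      calc |gH (α i + 1) (s⁻¹ * (x i - r * y i))| * (s⁻¹ * r)
          ≤ (hB (α i + 1) * E i) * (s⁻¹ * 1) := by
            refine mul_le_mul (hB_le _ _) ?_
              (mul_nonneg (inv_nonneg.2 hs0.le) hr0.le)
              (mul_nonneg (hB_pos _).le (hE0 i).le)
            exact mul_le_mul_of_nonneg_left hr1.le (inv_nonneg.2 hs0.le)
        _ = hB (α i + 1) * E i * s⁻¹ := by ring
    have h3 : (∏ j ∈ Finset.univ.erase i, hB (α j) * E j) * (E i) ≤ P * Ex := by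
      have h4 : (∏ j ∈ Finset.univ.erase i, hB (α j) * E j) * (E i)
          ≤ (∏ j ∈ Finset.univ.erase i, hB (α j) * E j) * (hB (α i) * E i) := by
        refine mul_le_mul_of_nonneg_left ?_
          (Finset.prod_nonneg (fun j _ => (mul_pos (hB_pos _) (hE0 j)).le))
        nlinarith [hB_one (α i), hE0 i]
      refine h4.trans ?_
      rw [Finset.prod_erase_mul _ _ (Finset.mem_univ i),
        Finset.prod_mul_distrib, ← hP, hprodE]
    calc |∏ j ∈ Finset.univ.erase i, gH (α j) (s⁻¹ * (x j - r * y j))| * |d i|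
        ≤ (∏ j ∈ Finset.univ.erase i, hB (α j) * E j) * (hB (α i + 1) * E i * s⁻¹) := by
          refine mul_le_mul h1 h2 (abs_nonneg _)
            (Finset.prod_nonneg (fun j _ => (mul_pos (hB_pos _) (hE0 j)).le))
      _ = ((∏ j ∈ Finset.univ.erase i, hB (α j) * E j) * E i) * (hB (α i + 1) * s⁻¹) := by
          ring
      _ ≤ (P * Ex) * (hB (α i + 1) * s⁻¹) := by
          exact mul_le_mul_of_nonneg_right h3
            (mul_nonneg (hB_pos _).le (inv_nonneg.2 hs0.le))
      _ = P * Ex * hB (α i + 1) * s⁻¹ := by ring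
  have hLnorm : ‖L‖ ≤ P * Ex * S * s⁻¹ := by
    rw [hL]
    refine (norm_sum_le _ _).trans ?_
    calc ∑ i, ‖(∏ j ∈ Finset.univ.erase i, gH (α j) (s⁻¹ * (x j - r * y j))) •
          ((d i) • (EuclideanSpace.proj i : EuclideanSpace ℝ (Fin n) →L[ℝ] ℝ))‖
        ≤ ∑ i, P * Ex * hB (α i + 1) * s⁻¹ := Finset.sum_le_sum (fun i _ => hterm i)
      _ = P * Ex * S * s⁻¹ := by
          rw [hS, Finset.mul_sum, Finset.sum_mul]
  refine hLnorm.trans ?_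
  rw [div_eq_mul_inv]
  nlinarith [mul_nonneg hEx0.le (inv_nonneg.2 hs0.le)]
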